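/- For every b ∈ ℂ^× and every m ∈ ℤ, there exists a unique ℂ-algebra homomorphism θ_{b,m} : B_ν → B_ν such that θ_{b,m}(a) = b·k^m·a, θ_{b,m}(a⁺) = b^{-1}·a⁺·k^{-m}, θ_{b,m}(k) = k and θ_{b,m}(k⁻) = k⁻ (where k^m denotes the m-th power of k, using k⁻ for negative exponents), and each θ_{b,m} is bijective (an algebra automorphism of B_ν). -/

import Mathlib

noncomputable section

/-- Generators of the quantized oscillator algebra: `0 ↦ a⁺`, `1 ↦ a`, `2 ↦ k`, `3 ↦ k⁻`. -/
def G : Fin 4 → FreeAlgebra ℂ (Fin 4) := FreeAlgebra.ι ℂ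

/-- The defining relations of the quantized oscillator algebra `B_ν`:
`a·a⁺ − ν⁻¹·a⁺·a = k`, `a·a⁺ − ν·a⁺·a = k⁻`, `k·k⁻ = k⁻·k = 1`,
`k·a = ν⁻¹·a·k`, `k·a⁺ = ν·a⁺·k`. -/
inductive OscRel (ν : ℂ) : FreeAlgebra ℂ (Fin 4) → FreeAlgebra ℂ (Fin 4) → Prop
  | r1 : OscRel ν (G 1 * G 0 - ν⁻¹ • (G 0 * G 1)) (G 2)
  | r2 : OscRel ν (G 1 * G 0 - ν • (G 0 * G 1)) (G 3)
  | r3 : OscRel ν (G 2 * G 3) 1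
  | r4 : OscRel ν (G 3 * G 2) 1
  | r5 : OscRel ν (G 2 * G 1) (ν⁻¹ • (G 1 * G 2))
  | r6 : OscRel ν (G 2 * G 0) (ν • (G 0 * G 2))

/-- The quantized oscillator algebra `B_ν`, as the quotient of the free `ℂ`-algebra on
four generators `a⁺, a, k, k⁻` by the defining relations. -/
abbrev Osc (ν : ℂ) := RingQuot (OscRel ν)

/-- The creation generator `a⁺` of `B_ν`. -/
def ap (ν : ℂ) : Osc ν := RingQuot.mkAlgHom ℂ (OscRel ν) (G 0)

/-- The annihilation generator `a` of `B_ν`. -/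
def an (ν : ℂ) : Osc ν := RingQuot.mkAlgHom ℂ (OscRel ν) (G 1)

/-- The generator `k` of `B_ν`. -/
def kk (ν : ℂ) : Osc ν := RingQuot.mkAlgHom ℂ (OscRel ν) (G 2)

/-- The generator `k⁻` (the two-sided inverse of `k`) of `B_ν`. -/
def kinv (ν : ℂ) : Osc ν := RingQuot.mkAlgHom ℂ (OscRel ν) (G 3)

end

noncomputable section

/-- The integer power `k^m` in `B_ν`, using `k⁻` for negative exponents. -/
def kpow (ν : ℂ) (m : ℤ) : Osc ν :=
  if 0 ≤ m then kk ν ^ m.toNat else kinv ν ^ (-m).toNat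

namespace OscAux

variable (ν : ℂ)

lemma relq {x y : FreeAlgebra ℂ (Fin 4)} (h : OscRel ν x y) :
    RingQuot.mkAlgHom ℂ (OscRel ν) x = RingQuot.mkAlgHom ℂ (OscRel ν) y :=
  RingQuot.mkAlgHom_rel ℂ h

lemma rel1 : an ν * ap ν - ν⁻¹ • (ap ν * an ν) = kk ν := by
  simpa [an, ap, kk, map_sub, map_mul, map_smul] using relq ν (OscRel.r1)

lemma rel2 : an ν * ap ν - ν • (ap ν * an ν) = kinv ν := by
  simpa [an, ap, kinv, map_sub, map_mul, map_smul] using relq ν (OscRel.r2)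

lemma rel3 : kk ν * kinv ν = 1 := by
  simpa [kk, kinv, map_mul] using relq ν (OscRel.r3)

lemma rel4 : kinv ν * kk ν = 1 := by
  simpa [kk, kinv, map_mul] using relq ν (OscRel.r4)

lemma rel5 : kk ν * an ν = ν⁻¹ • (an ν * kk ν) := by
  simpa [kk, an, map_mul, map_smul] using relq ν (OscRel.r5)

lemma rel6 : kk ν * ap ν = ν • (ap ν * kk ν) := by
  simpa [kk, ap, map_mul, map_smul] using relq ν (OscRel.r6)

/-- `k` as a unit of `B_ν`. -/
def ku : (Osc ν)ˣ := ⟨kk ν, kinv ν, rel3 ν, rel4 ν⟩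

lemma commute_kk_kinv : Commute (kk ν) (kinv ν) :=
  ((Commute.refl (kk ν)).units_inv_right (u := ku ν))

lemma commute_kk_anap (hν : ν ≠ 0) : Commute (kk ν) (an ν * ap ν) := by
  show kk ν * (an ν * ap ν) = (an ν * ap ν) * kk ν
  rw [← mul_assoc, rel5, smul_mul_assoc, mul_assoc, rel6, mul_smul_comm, smul_smul,
    inv_mul_cancel₀ hν, one_smul, mul_assoc]

lemma commute_kk_apan (hν : ν ≠ 0) : Commute (kk ν) (ap ν * an ν) := by
  show kk ν * (ap ν * an ν) = (ap ν * an ν) * kk ν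
  rw [← mul_assoc, rel6, smul_mul_assoc, mul_assoc, rel5, mul_smul_comm, smul_smul,
    mul_inv_cancel₀ hν, one_smul, mul_assoc]

lemma commute_kinv {x : Osc ν} (h : Commute (kk ν) x) : Commute (kinv ν) x :=
  Commute.units_inv_left (u := ku ν) h

lemma commute_kpow {x : Osc ν} (h : Commute (kk ν) x) (m : ℤ) : Commute (kpow ν m) x := by
  unfold kpow
  split
  · exact h.pow_left _
  · exact (commute_kinv ν h).pow_left _

lemma pow_cancel1 (n : ℕ) : kk ν ^ n * kinv ν ^ n = 1 := by
  induction n with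
  | zero => simp
  | succ n ih =>
    rw [pow_succ, pow_succ', mul_assoc, ← mul_assoc (kk ν), rel3, one_mul, ih]

lemma pow_cancel2 (n : ℕ) : kinv ν ^ n * kk ν ^ n = 1 := by
  induction n with
  | zero => simp
  | succ n ih =>
    rw [pow_succ, pow_succ', mul_assoc, ← mul_assoc (kinv ν), rel4, one_mul, ih]

lemma kpow_mul_neg (m : ℤ) : kpow ν m * kpow ν (-m) = 1 := by
  unfold kpow
  rcases lt_trichotomy m 0 with h | rfl | h
  · rw [if_neg (by omega), if_pos (by omega)]
    exact pow_cancel2 ν _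
  · simp
  · rw [if_pos (by omega), if_neg (by omega), neg_neg]
    exact pow_cancel1 ν _

lemma kpow_neg_mul (m : ℤ) : kpow ν (-m) * kpow ν m = 1 := by
  simpa using kpow_mul_neg ν (-m)

/-- Extensionality for algebra homs out of `B_ν`. -/
lemma hom_ext {A : Type*} [Semiring A] [Algebra ℂ A] {θ₁ θ₂ : Osc ν →ₐ[ℂ] A}
    (h : ∀ i, θ₁ (RingQuot.mkAlgHom ℂ (OscRel ν) (G i)) =
      θ₂ (RingQuot.mkAlgHom ℂ (OscRel ν) (G i))) : θ₁ = θ₂ := by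
  have key : θ₁.comp (RingQuot.mkAlgHom ℂ (OscRel ν)) =
      θ₂.comp (RingQuot.mkAlgHom ℂ (OscRel ν)) := by
    apply FreeAlgebra.hom_ext
    funext i
    simpa [G] using h i
  refine AlgHom.ext fun x => ?_
  obtain ⟨y, rfl⟩ := RingQuot.mkAlgHom_surjective ℂ (OscRel ν) x
  exact DFunLike.congr_fun key y

lemma map_kpow {θ : Osc ν →ₐ[ℂ] Osc ν} (h2 : θ (kk ν) = kk ν) (h3 : θ (kinv ν) = kinv ν)
    (m : ℤ) : θ (kpow ν m) = kpow ν m := by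
  unfold kpow
  split <;> simp [map_pow, h2, h3]

/-- The generator images of the twist. -/
def f (b : ℂ) (m : ℤ) : Fin 4 → Osc ν :=
  ![b⁻¹ • (ap ν * kpow ν (-m)), b • (kpow ν m * an ν), kk ν, kinv ν]

lemma liftrel (hν : ν ≠ 0) (b : ℂ) (hb : b ≠ 0) (m : ℤ) :
    ∀ ⦃x y : FreeAlgebra ℂ (Fin 4)⦄, OscRel ν x y →
      FreeAlgebra.lift ℂ (f ν b m) x = FreeAlgebra.lift ℂ (f ν b m) y := by
  intro x y h
  induction h with
  | r1 =>
    simp only [map_sub, map_mul, map_smul, G, FreeAlgebra.lift_ι_apply, f,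
      Matrix.cons_val_zero, Matrix.cons_val_one, Matrix.head_cons,
      Matrix.cons_val_two, Matrix.cons_val_three, Matrix.tail_cons]
    rw [smul_mul_smul_comm, mul_inv_cancel₀ hb, one_smul,
      smul_mul_smul_comm, inv_mul_cancel₀ hb, one_smul]
    rw [← mul_assoc, mul_assoc (kpow ν m),
      (commute_kpow ν (commute_kk_anap ν hν) m).eq, mul_assoc, kpow_mul_neg, mul_one]
    rw [mul_assoc (ap ν), ← mul_assoc (kpow ν (-m)), kpow_neg_mul, one_mul]
    exact rel1 ν
  | r2 =>
    simp only [map_sub, map_mul, map_smul, G, FreeAlgebra.lift_ι_apply, f,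
      Matrix.cons_val_zero, Matrix.cons_val_one, Matrix.head_cons,
      Matrix.cons_val_two, Matrix.cons_val_three, Matrix.tail_cons]
    rw [smul_mul_smul_comm, mul_inv_cancel₀ hb, one_smul,
      smul_mul_smul_comm, inv_mul_cancel₀ hb, one_smul]
    rw [← mul_assoc, mul_assoc (kpow ν m),
      (commute_kpow ν (commute_kk_anap ν hν) m).eq, mul_assoc, kpow_mul_neg, mul_one]
    rw [mul_assoc (ap ν), ← mul_assoc (kpow ν (-m)), kpow_neg_mul, one_mul]
    exact rel2 ν
  | r3 =>
    simpa [G, FreeAlgebra.lift_ι_apply, f] using rel3 ν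
  | r4 =>
    simpa [G, FreeAlgebra.lift_ι_apply, f] using rel4 ν
  | r5 =>
    simp only [map_mul, map_smul, G, FreeAlgebra.lift_ι_apply, f,
      Matrix.cons_val_zero, Matrix.cons_val_one, Matrix.head_cons,
      Matrix.cons_val_two, Matrix.cons_val_three, Matrix.tail_cons]
    rw [mul_smul_comm, smul_mul_assoc, smul_comm]
    congr 1
    rw [← mul_assoc, ← (commute_kpow ν (Commute.refl (kk ν)) m).eq, mul_assoc, rel5,
      mul_smul_comm, ← mul_assoc]
  | r6 =>
    simp only [map_mul, map_smul, G, FreeAlgebra.lift_ι_apply, f,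
      Matrix.cons_val_zero, Matrix.cons_val_one, Matrix.head_cons,
      Matrix.cons_val_two, Matrix.cons_val_three, Matrix.tail_cons]
    rw [mul_smul_comm, smul_mul_assoc, smul_comm]
    congr 1
    rw [← mul_assoc, rel6, smul_mul_assoc, mul_assoc,
      ← (commute_kpow ν (Commute.refl (kk ν)) (-m)).eq, ← mul_assoc]

/-- The twist algebra endomorphism `θ_{b,m}`. -/
def twist (hν : ν ≠ 0) (b : ℂ) (hb : b ≠ 0) (m : ℤ) : Osc ν →ₐ[ℂ] Osc ν :=
  RingQuot.liftAlgHom ℂ ⟨FreeAlgebra.lift ℂ (f ν b m), liftrel ν hν b hb m⟩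

lemma twist_congr {hν : ν ≠ 0} {b b' : ℂ} (hb : b ≠ 0) (hb' : b' ≠ 0) {m m' : ℤ}
    (h1 : b = b') (h2 : m = m') : twist ν hν b hb m = twist ν hν b' hb' m' := by
  subst h1; subst h2; rfl

variable {hν : ν ≠ 0} {b : ℂ} {hb : b ≠ 0} {m : ℤ}

lemma twist_G (i : Fin 4) :
    twist ν hν b hb m (RingQuot.mkAlgHom ℂ (OscRel ν) (G i)) = f ν b m i := by
  rw [twist, RingQuot.liftAlgHom_mkAlgHom_apply]
  simp [G, FreeAlgebra.lift_ι_apply]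

lemma twist_ap : twist ν hν b hb m (ap ν) = b⁻¹ • (ap ν * kpow ν (-m)) := by
  simpa [f, ap] using twist_G ν (hν := hν) (hb := hb) (m := m) 0

lemma twist_an : twist ν hν b hb m (an ν) = b • (kpow ν m * an ν) := by
  simpa [f, an] using twist_G ν (hν := hν) (hb := hb) (m := m) 1

lemma twist_kk : twist ν hν b hb m (kk ν) = kk ν := by
  simpa [f, kk] using twist_G ν (hν := hν) (hb := hb) (m := m) 2

lemma twist_kinv : twist ν hν b hb m (kinv ν) = kinv ν := by
  simpa [f, kinv] using twist_G ν (hν := hν) (hb := hb) (m := m) 3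

lemma twist_kpow (l : ℤ) : twist ν hν b hb m (kpow ν l) = kpow ν l :=
  map_kpow ν (twist_kk ν) (twist_kinv ν) l

lemma twist_comp (hν : ν ≠ 0) (b : ℂ) (hb : b ≠ 0) (m : ℤ) :
    (twist ν hν b hb m).comp (twist ν hν b⁻¹ (inv_ne_zero hb) (-m)) =
      AlgHom.id ℂ (Osc ν) := by
  apply hom_ext
  intro i
  fin_cases i
  · show (twist ν hν b hb m).comp (twist ν hν b⁻¹ (inv_ne_zero hb) (-m)) (ap ν) =
      AlgHom.id ℂ (Osc ν) (ap ν)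
    rw [AlgHom.comp_apply, twist_ap, map_smul, map_mul, twist_ap, twist_kpow, AlgHom.id_apply,
      inv_inv, neg_neg, smul_mul_assoc, smul_smul, mul_inv_cancel₀ hb, one_smul,
      mul_assoc, kpow_neg_mul, mul_one]
  · show (twist ν hν b hb m).comp (twist ν hν b⁻¹ (inv_ne_zero hb) (-m)) (an ν) =
      AlgHom.id ℂ (Osc ν) (an ν)
    rw [AlgHom.comp_apply, twist_an, map_smul, map_mul, twist_an, twist_kpow, AlgHom.id_apply,
      mul_smul_comm, smul_smul, inv_mul_cancel₀ hb, one_smul,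
      ← mul_assoc, kpow_neg_mul, one_mul]
  · show (twist ν hν b hb m).comp (twist ν hν b⁻¹ (inv_ne_zero hb) (-m)) (kk ν) =
      AlgHom.id ℂ (Osc ν) (kk ν)
    rw [AlgHom.comp_apply, twist_kk, twist_kk, AlgHom.id_apply]
  · show (twist ν hν b hb m).comp (twist ν hν b⁻¹ (inv_ne_zero hb) (-m)) (kinv ν) =
      AlgHom.id ℂ (Osc ν) (kinv ν)
    rw [AlgHom.comp_apply, twist_kinv, twist_kinv, AlgHom.id_apply]

lemma twist_comp' (hν : ν ≠ 0) (b : ℂ) (hb : b ≠ 0) (m : ℤ) :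
    (twist ν hν b⁻¹ (inv_ne_zero hb) (-m)).comp (twist ν hν b hb m) =
      AlgHom.id ℂ (Osc ν) := by
  have := twist_comp ν hν b⁻¹ (inv_ne_zero hb) (-m)
  rwa [twist_congr ν (inv_ne_zero (inv_ne_zero hb)) hb (inv_inv b) (neg_neg m)] at this

end OscAux

/-- Lemma 4.4(ii): for every `b ∈ ℂˣ` and `m ∈ ℤ` there is a unique
`ℂ`-algebra homomorphism `θ_{b,m} : B_ν → B_ν` with `θ_{b,m}(a) = b·k^m·a`,
`θ_{b,m}(a⁺) = b⁻¹·a⁺·k^{−m}`, `θ_{b,m}(k) = k`, `θ_{b,m}(k⁻) = k⁻`, and it is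
bijective. -/
theorem osc_twist_automorphism (ν : ℂ) (hν : ν ≠ 0) (b : ℂ) (hb : b ≠ 0) (m : ℤ) :
    ∃ θ : Osc ν →ₐ[ℂ] Osc ν,
      (θ (an ν) = b • (kpow ν m * an ν) ∧ θ (ap ν) = b⁻¹ • (ap ν * kpow ν (-m)) ∧
        θ (kk ν) = kk ν ∧ θ (kinv ν) = kinv ν) ∧
      Function.Bijective θ ∧
      ∀ θ' : Osc ν →ₐ[ℂ] Osc ν,
        (θ' (an ν) = b • (kpow ν m * an ν) ∧ θ' (ap ν) = b⁻¹ • (ap ν * kpow ν (-m)) ∧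
          θ' (kk ν) = kk ν ∧ θ' (kinv ν) = kinv ν) → θ' = θ := by
  refine ⟨OscAux.twist ν hν b hb m,
    ⟨OscAux.twist_an ν, OscAux.twist_ap ν, OscAux.twist_kk ν, OscAux.twist_kinv ν⟩, ?_, ?_⟩
  · have h1 := OscAux.twist_comp ν hν b hb m
    have h2 := OscAux.twist_comp' ν hν b hb m
    exact ⟨Function.LeftInverse.injective
        (fun x => DFunLike.congr_fun h2 x),
      Function.RightInverse.surjective (fun x => DFunLike.congr_fun h1 x)⟩
  · rintro θ' ⟨h1, h2, h3, h4⟩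
    apply OscAux.hom_ext
    intro i
    fin_cases i
    · show θ' (ap ν) = OscAux.twist ν hν b hb m (ap ν)
      rw [h2, OscAux.twist_ap]
    · show θ' (an ν) = OscAux.twist ν hν b hb m (an ν)
      rw [h1, OscAux.twist_an]
    · show θ' (kk ν) = OscAux.twist ν hν b hb m (kk ν)
      rw [h3, OscAux.twist_kk]
    · show θ' (kinv ν) = OscAux.twist ν hν b hb m (kinv ν)
      rw [h4, OscAux.twist_kinv]


end
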